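/- Suppose the bipartite graph G(Y,X;A) of a matrix A ∈ R^{p×q} has a perfect n-gram matching and A is generic. Then the n-gram (Khatri-Rao power) matrix A^{⊙n} ∈ R^{p^n×q} is full column rank, almost surely. -/
import Mathlib


open MvPolynomial

/-- Neighbors of a column `j` via the edge set `M`. -/
def matchedNeighbors {p q : ℕ} (M : Finset (Fin q × Fin p)) (j : Fin q) : Finset (Fin p) :=
  Finset.univ.filter fun i => (j, i) ∈ M

/-- `M` is a perfect `n`-gram matching for the bipartite graph with sparsity pattern `P`
(columns `[q]` on the left, rows `[p]` on the right, edge `(j,i)` iff `(i,j) ∈ P`). -/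
def IsPerfectNGramMatchingPat {p q : ℕ} (P : Finset (Fin p × Fin q))
    (M : Finset (Fin q × Fin p)) (n : ℕ) : Prop :=
  (∀ e ∈ M, (e.2, e.1) ∈ P) ∧ (∀ j : Fin q, (matchedNeighbors M j).card = n) ∧
    ∀ j₁ j₂ : Fin q, j₁ ≠ j₂ →
      (matchedNeighbors M j₁ ∩ matchedNeighbors M j₂).card <
        min (matchedNeighbors M j₁).card (matchedNeighbors M j₂).card

/-- If the support bipartite graph of a generic matrix `A ∈ ℝ^{p×q}` has a perfect
`n`-gram matching, then the `n`-th Khatri-Rao power `A^{⊙n} ∈ ℝ^{pⁿ×q}` is full column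
rank almost surely. Genericity is modeled by independent indeterminate entries on the
support pattern `P`: the columns of the Khatri-Rao power of the polynomial matrix,
`(i₁,…,iₙ) ↦ ∏ₖ A (iₖ) j`, are linearly independent. -/
theorem khatriRao_full_column_rank_of_perfect_ngram_matching (p q n : ℕ)
    (P : Finset (Fin p × Fin q))
    (M : Finset (Fin q × Fin p)) (hM : IsPerfectNGramMatchingPat P M n)
    (A : Matrix (Fin p) (Fin q) (MvPolynomial (Fin p × Fin q) ℝ))
    (hA1 : ∀ i j, (i, j) ∈ P → A i j = MvPolynomial.X (i, j))
    (hA2 : ∀ i j, (i, j) ∉ P → A i j = 0) :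
    LinearIndependent (MvPolynomial (Fin p × Fin q) ℝ)
      (fun j : Fin q => fun t : Fin n → Fin p => ∏ k : Fin n, A (t k) j) := by
  classical
  obtain ⟨hMP, hcard, hdist⟩ := hM
  -- enumerate the matched neighbors of each column
  let t : Fin q → Fin n → Fin p := fun j k =>
    ((matchedNeighbors M j).orderIsoOfFin (hcard j) k : Fin p)
  have ht_mem : ∀ j k, t j k ∈ matchedNeighbors M j := fun j k =>
    ((matchedNeighbors M j).orderIsoOfFin (hcard j) k).2
  have ht_inj : ∀ j, Function.Injective (t j) := by
    intro j a b hab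
    exact ((matchedNeighbors M j).orderIsoOfFin (hcard j)).injective (Subtype.ext hab)
  have ht_surj : ∀ j i, i ∈ matchedNeighbors M j → ∃ k, t j k = i := by
    intro j i hi
    obtain ⟨k, hk⟩ := ((matchedNeighbors M j).orderIsoOfFin (hcard j)).surjective ⟨i, hi⟩
    exact ⟨k, congrArg Subtype.val hk⟩
  have hP : ∀ j k, (t j k, j) ∈ P := by
    intro j k
    have h1 := ht_mem j k
    simp only [matchedNeighbors, Finset.mem_filter, Finset.mem_univ, true_and] at h1
    exact hMP (j, t j k) h1
  -- the square submatrix of the Khatri-Rao power given by the signature rows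
  set B : Matrix (Fin q) (Fin q) (MvPolynomial (Fin p × Fin q) ℝ) :=
    fun j j' => ∏ k : Fin n, A (t j k) j' with hB
  -- exponent vector of the term associated to a permutation
  set m : Equiv.Perm (Fin q) → ((Fin p × Fin q) →₀ ℕ) := fun σ =>
    ∑ j : Fin q, ∑ k : Fin n, Finsupp.single (t (σ j) k, j) 1 with hm
  have hm_apply : ∀ (σ : Equiv.Perm (Fin q)) (i : Fin p) (j : Fin q),
      (m σ) (i, j) = (Finset.univ.filter fun k : Fin n => t (σ j) k = i).card := by
    intro σ i j
    rw [hm]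
    rw [Finset.sum_apply']
    rw [Finset.sum_eq_single j]
    · rw [Finset.sum_apply', Finset.card_filter]
      refine Finset.sum_congr rfl fun k _ => ?_
      rw [Finsupp.single_apply]
      simp [Prod.ext_iff]
    · intro j' _ hj'
      rw [Finset.sum_apply']
      refine Finset.sum_eq_zero fun k _ => ?_
      rw [Finsupp.single_apply]
      simp [Prod.ext_iff, hj']
    · simp
  have hm_one : ∀ (σ : Equiv.Perm (Fin q)) (i : Fin p) (j : Fin q),
      i ∈ matchedNeighbors M (σ j) → (m σ) (i, j) = 1 := by
    intro σ i j hi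
    obtain ⟨k₀, hk₀⟩ := ht_surj (σ j) i hi
    rw [hm_apply]
    have : (Finset.univ.filter fun k : Fin n => t (σ j) k = i) = {k₀} := by
      ext k
      simp only [Finset.mem_filter, Finset.mem_univ, true_and, Finset.mem_singleton]
      constructor
      · intro hk; exact ht_inj (σ j) (hk.trans hk₀.symm)
      · rintro rfl; exact hk₀
    rw [this, Finset.card_singleton]
  have hm_zero : ∀ (σ : Equiv.Perm (Fin q)) (i : Fin p) (j : Fin q),
      i ∉ matchedNeighbors M (σ j) → (m σ) (i, j) = 0 := by
    intro σ i j hi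
    rw [hm_apply]
    rw [Finset.card_eq_zero]
    refine Finset.filter_eq_empty_iff.2 fun k _ => ?_
    intro hk
    exact hi (hk ▸ ht_mem (σ j) k)
  -- distinct permutations ≠ 1 give exponents different from the identity exponent
  have hm_ne : ∀ σ : Equiv.Perm (Fin q), σ ≠ 1 → m σ ≠ m 1 := by
    intro σ hσ hcontra
    have : ∃ j, σ j ≠ j := by
      by_contra h
      push_neg at h
      exact hσ (Equiv.ext h)
    obtain ⟨j, hj⟩ := this
    have hlt := hdist (σ j) j hj
    rw [hcard, hcard, min_self, ← hcard j] at hlt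
    have hsub : matchedNeighbors M (σ j) ∩ matchedNeighbors M j ⊆ matchedNeighbors M j :=
      Finset.inter_subset_right
    have hne : matchedNeighbors M (σ j) ∩ matchedNeighbors M j ≠ matchedNeighbors M j := by
      intro h; rw [h] at hlt; exact lt_irrefl _ hlt
    obtain ⟨i, hi1, hi2⟩ := Finset.exists_of_ssubset (hsub.ssubset_of_ne hne)
    have hi3 : i ∉ matchedNeighbors M (σ j) := fun h => hi2 (Finset.mem_inter.2 ⟨h, hi1⟩)
    have e1 : (m σ) (i, j) = 0 := hm_zero σ i j hi3
    have e2 : (m 1) (i, j) = 1 := by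
      apply hm_one
      simpa using hi1
    rw [hcontra, e2] at e1
    exact one_ne_zero e1
  -- each determinant term is a monomial (or zero)
  have hmono : ∀ σ : Equiv.Perm (Fin q), (∀ j k, (t (σ j) k, j) ∈ P) →
      (∏ j, B (σ j) j) = monomial (m σ) (1 : ℝ) := by
    intro σ hall
    have step : ∀ j, B (σ j) j = monomial (∑ k : Fin n, Finsupp.single (t (σ j) k, j) 1) 1 := by
      intro j
      show (∏ k : Fin n, A (t (σ j) k) j) = _
      rw [Finset.prod_congr rfl (fun k _ => hA1 _ _ (hall j k))]
      rw [monomial_sum_one]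
      refine Finset.prod_congr rfl fun k _ => ?_
      rw [← X_pow_eq_monomial, pow_one]
    rw [Finset.prod_congr rfl fun j _ => step j]
    rw [show m σ = ∑ j : Fin q, ∑ k : Fin n, Finsupp.single (t (σ j) k, j) 1 from rfl]
    rw [monomial_sum_one]
  have hterm : ∀ σ : Equiv.Perm (Fin q),
      (∏ j, B (σ j) j) = monomial (m σ) (1 : ℝ) ∨ (∏ j, B (σ j) j) = 0 := by
    intro σ
    by_cases hall : ∀ j k, (t (σ j) k, j) ∈ P
    · exact Or.inl (hmono σ hall)
    · right
      push_neg at hall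
      obtain ⟨j, k, hjk⟩ := hall
      apply Finset.prod_eq_zero (Finset.mem_univ j)
      show (∏ k : Fin n, A (t (σ j) k) j) = 0
      apply Finset.prod_eq_zero (Finset.mem_univ k)
      exact hA2 _ _ hjk
  have hterm1 : (∏ j, B ((1 : Equiv.Perm (Fin q)) j) j) = monomial (m 1) (1 : ℝ) := by
    refine hmono 1 fun j k => ?_
    simpa using hP j k
  -- the determinant has coefficient 1 at the identity exponent
  have hdet : Matrix.det B ≠ 0 := by
    have hc : coeff (m 1) (Matrix.det B) = 1 := by
      rw [Matrix.det_apply, coeff_sum]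
      rw [Finset.sum_eq_single (1 : Equiv.Perm (Fin q))]
      · rw [coeff_smul, hterm1, coeff_monomial, if_pos rfl]
        simp
      · intro σ _ hσ
        rw [coeff_smul]
        rcases hterm σ with h | h
        · rw [h, coeff_monomial, if_neg (hm_ne σ hσ)]
          simp
        · rw [h, coeff_zero]
          simp
      · simp
    intro h
    rw [h, coeff_zero] at hc
    exact zero_ne_one hc
  -- conclude linear independence from the nonzero determinant
  rw [Fintype.linearIndependent_iff]
  intro g hg j
  have hrow : B.mulVec g = 0 := by
    funext j₀
    have h1 := congrFun hg (t j₀)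
    simp only [Finset.sum_apply, Pi.smul_apply, smul_eq_mul, Pi.zero_apply] at h1
    rw [Matrix.mulVec, Pi.zero_apply]
    rw [show (dotProduct (B j₀) g) = ∑ j', B j₀ j' * g j' from rfl]
    rw [← h1]
    refine Finset.sum_congr rfl fun j' _ => ?_
    show (∏ k : Fin n, A (t j₀ k) j') * g j' = g j' * ∏ k : Fin n, A (t j₀ k) j'
    ring
  have hkey : Matrix.det B • g = 0 := by
    have e1 : (Matrix.adjugate B).mulVec (B.mulVec g) = Matrix.det B • g := by
      rw [Matrix.mulVec_mulVec, Matrix.adjugate_mul, Matrix.smul_mulVec,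
        Matrix.one_mulVec]
    rw [hrow, Matrix.mulVec_zero] at e1
    exact e1.symm
  have := congrFun hkey j
  simp only [Pi.smul_apply, smul_eq_mul, Pi.zero_apply] at this
  rcases mul_eq_zero.1 this with h | h
  · exact absurd h hdet
  · exact h
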